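/- Let A be an AM-algebra with unit e and let M be a maximal ideal of A. Then M has codimension one: for every x ∈ A there exists a unique λ ∈ ℝ such that x − λ•e ∈ M. (Equivalently, the quotient A/M is lattice and algebra isomorphic to ℝ.) -/

import Mathlib

/-- A subset of a Banach lattice algebra is an *ideal* if it is a linear subspace,
an order ideal, and a two-sided ring ideal. -/
def IsLatticeAlgebraIdeal {A : Type*} [NormedAddCommGroup A] [Lattice A] [IsOrderedAddMonoid A] [HasSolidNorm A] [NormedSpace ℝ A]
    (mul : A →ₗ[ℝ] A →ₗ[ℝ] A) (I : Set A) : Prop :=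
  (0 : A) ∈ I ∧
  (∀ x ∈ I, ∀ y ∈ I, x + y ∈ I) ∧
  (∀ (r : ℝ), ∀ x ∈ I, r • x ∈ I) ∧
  (∀ x ∈ I, ∀ y : A, |y| ≤ |x| → y ∈ I) ∧
  (∀ x ∈ I, ∀ c : A, mul c x ∈ I ∧ mul x c ∈ I)

section Aux

variable {A : Type*} [NormedAddCommGroup A] [Lattice A] [IsOrderedAddMonoid A] [HasSolidNorm A] [NormedSpace ℝ A]
    [PosSMulStrictMono ℝ A] [PosSMulReflectLT ℝ A]

omit [HasSolidNorm A] [NormedSpace ℝ A] [PosSMulStrictMono ℝ A] [PosSMulReflectLT ℝ A] in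
/-- Riesz decomposition type inequality. -/
theorem aux_riesz_inf_add (a b c : A) (ha : 0 ≤ a) (hb : 0 ≤ b) (hc : 0 ≤ c) :
    a ⊓ (b + c) ≤ a ⊓ b + a ⊓ c := by
  set x := a ⊓ (b + c) with hx
  have h1 : x - a ⊓ c = (x - a) ⊔ (x - c) := sub_inf a c x
  have h2 : x - a ≤ a ⊓ b := le_trans (by simp [hx, inf_le_left]) (le_inf ha hb)
  have h3 : x - c ≤ a ⊓ b := le_inf
    (sub_le_iff_le_add.2 (le_trans inf_le_left (le_add_of_nonneg_right hc)))
    (sub_le_iff_le_add.2 inf_le_right)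
  have h4 := sup_le h2 h3
  rw [← h1] at h4
  exact sub_le_iff_le_add.1 h4

omit [HasSolidNorm A] [NormedSpace ℝ A] [PosSMulStrictMono ℝ A] [PosSMulReflectLT ℝ A] in
theorem aux_abs_sup_le (a b : A) : |a ⊔ b| ≤ |a| + |b| := by
  refine abs_le'.2 ⟨sup_le ((le_abs_self a).trans (le_add_of_nonneg_right (abs_nonneg b)))
      ((le_abs_self b).trans (le_add_of_nonneg_left (abs_nonneg a))), ?_⟩
  rw [neg_sup]
  exact inf_le_left.trans ((neg_le_abs a).trans (le_add_of_nonneg_right (abs_nonneg b)))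

theorem aux_smul_le_abs_smul_abs (r : ℝ) (w : A) : r • w ≤ |r| • |w| := by
  rcases le_total 0 r with hr | hr
  · calc r • w ≤ r • |w| := smul_le_smul_of_nonneg_left (le_abs_self w) hr
      _ = |r| • |w| := by rw [abs_of_nonneg hr]
  · calc r • w = (-r) • (-w) := by simp
      _ ≤ (-r) • |w| := smul_le_smul_of_nonneg_left (neg_le_abs w) (by linarith)
      _ = |r| • |w| := by rw [abs_of_nonpos hr]

theorem aux_abs_smul_le (r : ℝ) (w : A) : |r • w| ≤ |r| • |w| := by
  refine abs_le'.2 ⟨aux_smul_le_abs_smul_abs r w, ?_⟩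
  have := aux_smul_le_abs_smul_abs (-r) w
  simpa using this

theorem aux_smul_inf (r : ℝ) (hr : 0 < r) (a b : A) : r • (a ⊓ b) = (r • a) ⊓ (r • b) :=
  (OrderIso.smulRight hr).map_inf a b

end Aux

/-- In an AM-algebra with unit `e`, every maximal ideal `M` has
codimension one: each `x` can be written uniquely as `x = λ • e + m` with `m ∈ M`. -/
theorem am_algebra_maximal_ideal_codimension_one
    {A : Type*} [NormedAddCommGroup A] [Lattice A] [IsOrderedAddMonoid A] [HasSolidNorm A] [NormedSpace ℝ A]
    [PosSMulStrictMono ℝ A] [PosSMulReflectLT ℝ A] [CompleteSpace A]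
    (mul : A →ₗ[ℝ] A →ₗ[ℝ] A)
    (mul_assoc : ∀ a b c : A, mul (mul a b) c = mul a (mul b c))
    (norm_mul_le : ∀ a b : A, ‖mul a b‖ ≤ ‖a‖ * ‖b‖)
    (mul_nonneg : ∀ a b : A, 0 ≤ a → 0 ≤ b → 0 ≤ mul a b)
    (e : A) (one_mul : ∀ a : A, mul e a = a) (mul_one : ∀ a : A, mul a e = a)
    (norm_e : ‖e‖ = 1)
    -- AM-space with unit `e`
    (order_unit : ∀ x : A, ∃ l : ℝ, 0 ≤ l ∧ |x| ≤ l • e)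
    (am_norm : ∀ x : A, ‖x‖ = sInf {l : ℝ | 0 < l ∧ |x| ≤ l • e})
    -- `M` is a maximal ideal
    (M : Set A) (hM : IsLatticeAlgebraIdeal mul M) (hMproper : M ≠ Set.univ)
    (hMmax : ∀ J : Set A, IsLatticeAlgebraIdeal mul J → J ≠ Set.univ → M ⊆ J → J = M) :
    ∀ x : A, ∃! l : ℝ, x - l • e ∈ M := by
  obtain ⟨hM0, hMadd, hMsmul, hMord, hMmul⟩ := hM
  -- `e` is positive
  have he_pos : (0 : A) ≤ e := by
    obtain ⟨l, hl, hle⟩ := order_unit e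
    have h1 : -e ≤ l • e := (neg_le_abs e).trans hle
    have h2 : (0 : A) ≤ (l + 1) • e := by
      rw [add_smul, one_smul]
      have h4 := add_le_add_left h1 e
      rwa [neg_add_cancel] at h4
    have h3 : (0:ℝ) < l + 1 := by linarith
    have h5 := smul_le_smul_of_nonneg_left h2 (le_of_lt (inv_pos.2 h3))
    rwa [smul_zero, smul_smul, inv_mul_cancel₀ (ne_of_gt h3), one_smul] at h5
  have habs_e : |e| = e := abs_of_nonneg he_pos
  -- no member of `M` can dominate `e`
  have hMfull : ∀ m ∈ M, ¬ (e ≤ m) := by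
    intro m hm hem
    have heM : e ∈ M := hMord m hm e (by rw [habs_e]; exact hem.trans (le_abs_self m))
    apply hMproper
    ext w
    simp only [Set.mem_univ, iff_true]
    obtain ⟨l, hl, hlw⟩ := order_unit w
    have hle : l • e ∈ M := hMsmul l e heM
    exact hMord _ hle w (by rwa [abs_of_nonneg (smul_nonneg hl he_pos)])
  have heM : e ∉ M := fun h => hMfull e h le_rfl
  -- from norm bound to order bound
  have norm_to_abs : ∀ (w : A) (l : ℝ), ‖w‖ < l → |w| ≤ l • e := by
    intro w l hwl
    obtain ⟨l₀, hl₀, hwl₀⟩ := order_unit w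
    have hne : ({l : ℝ | 0 < l ∧ |w| ≤ l • e}).Nonempty :=
      ⟨l₀ + 1, by positivity, hwl₀.trans (smul_le_smul_of_nonneg_right (by linarith) he_pos)⟩
    rw [am_norm w] at hwl
    obtain ⟨s, hs, hsl⟩ := exists_lt_of_csInf_lt hne hwl
    exact hs.2.trans (smul_le_smul_of_nonneg_right (le_of_lt hsl) he_pos)
  -- from order bound to norm bound
  have abs_to_norm : ∀ (w : A) (l : ℝ), 0 ≤ l → |w| ≤ l • e → ‖w‖ ≤ l := by
    intro w l hl hwl
    rw [am_norm w]
    have hbdd : BddBelow {l : ℝ | 0 < l ∧ |w| ≤ l • e} := ⟨0, fun t ht => le_of_lt ht.1⟩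
    refine le_of_forall_pos_le_add fun ε hε => ?_
    exact csInf_le hbdd ⟨by linarith, hwl.trans (smul_le_smul_of_nonneg_right (by linarith) he_pos)⟩
  -- monotonicity of multiplication
  have mul_mono_left : ∀ a b c : A, 0 ≤ a → b ≤ c → mul a b ≤ mul a c := by
    intro a b c ha hbc
    have h := mul_nonneg a (c - b) ha (sub_nonneg.2 hbc)
    rw [map_sub] at h
    exact sub_nonneg.1 h
  have mul_mono_right : ∀ a b c : A, 0 ≤ a → b ≤ c → mul b a ≤ mul c a := by
    intro a b c ha hbc
    have h := mul_nonneg (c - b) a (sub_nonneg.2 hbc) ha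
    rw [map_sub, LinearMap.sub_apply] at h
    exact sub_nonneg.1 h
  -- |mul c y| ≤ mul |c| |y|
  have mul_abs_le : ∀ c y : A, |mul c y| ≤ mul |c| |y| := by
    intro c y
    set a := mul (c⁺) (y⁺) + mul (c⁻) (y⁻) with ha_def
    set b := mul (c⁺) (y⁻) + mul (c⁻) (y⁺) with hb_def
    have ha : 0 ≤ a := add_nonneg (mul_nonneg _ _ (posPart_nonneg c) (posPart_nonneg y))
      (mul_nonneg _ _ (negPart_nonneg c) (negPart_nonneg y))
    have hb : 0 ≤ b := add_nonneg (mul_nonneg _ _ (posPart_nonneg c) (negPart_nonneg y))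
      (mul_nonneg _ _ (negPart_nonneg c) (posPart_nonneg y))
    have hab : mul c y = a - b := by
      conv_lhs => rw [← posPart_sub_negPart c, ← posPart_sub_negPart y]
      simp only [map_sub, LinearMap.sub_apply, ha_def, hb_def]
      abel
    have heq : mul |c| |y| = a + b := by
      rw [← posPart_add_negPart c, ← posPart_add_negPart y]
      simp only [map_add, LinearMap.add_apply, ha_def, hb_def]
      abel
    rw [hab, heq]
    refine abs_le'.2 ⟨?_, ?_⟩
    · exact (sub_le_self a hb).trans (le_add_of_nonneg_right hb)
    · rw [neg_sub]
      exact (sub_le_self b ha).trans (le_add_of_nonneg_left ha)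
  -- helpers about M
  have habs_mem : ∀ m ∈ M, |m| ∈ M := fun m hm => hMord m hm |m| (by rw [abs_abs])
  have hsup_mem : ∀ m ∈ M, ∀ m' ∈ M, m ⊔ m' ∈ M := by
    intro m hm m' hm'
    have hmem : |m| + |m'| ∈ M := hMadd _ (habs_mem m hm) _ (habs_mem m' hm')
    refine hMord _ hmem _ ?_
    rw [abs_of_nonneg (add_nonneg (abs_nonneg m) (abs_nonneg m'))]
    exact aux_abs_sup_le m m'
  have hMsub : ∀ a ∈ M, ∀ b ∈ M, a - b ∈ M := by
    intro a ha b hb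
    have h := hMadd a ha _ (hMsmul (-1) b hb)
    rwa [neg_one_smul, ← sub_eq_add_neg] at h
  have hbetween : ∀ a ∈ M, ∀ b ∈ M, ∀ v : A, a ≤ v → v ≤ b → v ∈ M := by
    intro a ha b hb v hav hvb
    have h1 : v - a ∈ M := by
      refine hMord (b - a) (hMsub b hb a ha) (v - a) ?_
      rw [abs_of_nonneg (sub_nonneg.2 hav), abs_of_nonneg (sub_nonneg.2 (hav.trans hvb))]
      exact sub_le_sub_right hvb a
    have h2 := hMadd _ h1 a ha
    rwa [sub_add_cancel] at h2
  -- the ideal generated by M and a positive y ∉ M contains e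
  have ideal_gen : ∀ y : A, 0 ≤ y → y ∉ M → ∃ m ∈ M, ∃ c : ℝ, 0 ≤ c ∧ e ≤ |m| + c • y := by
    intro y hy hyM
    set I : Set A := {w | ∃ m ∈ M, ∃ c : ℝ, 0 ≤ c ∧ |w| ≤ |m| + c • y} with hI_def
    have hI : IsLatticeAlgebraIdeal mul I := by
      refine ⟨⟨0, hM0, 0, le_rfl, by simp⟩, ?_, ?_, ?_, ?_⟩
      · rintro w₁ ⟨m₁, hm₁, c₁, hc₁, h₁⟩ w₂ ⟨m₂, hm₂, c₂, hc₂, h₂⟩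
        refine ⟨|m₁| + |m₂|, hMadd _ (habs_mem m₁ hm₁) _ (habs_mem m₂ hm₂), c₁ + c₂,
          by linarith, ?_⟩
        rw [abs_of_nonneg (add_nonneg (abs_nonneg m₁) (abs_nonneg m₂)), add_smul]
        calc |w₁ + w₂| ≤ |w₁| + |w₂| := abs_add_le w₁ w₂
          _ ≤ (|m₁| + c₁ • y) + (|m₂| + c₂ • y) := add_le_add h₁ h₂
          _ = |m₁| + |m₂| + (c₁ • y + c₂ • y) := by abel
      · rintro r w ⟨m, hm, c, hc, h⟩
        refine ⟨|r| • |m|, hMsmul |r| _ (habs_mem m hm), |r| * c,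
          _root_.mul_nonneg (abs_nonneg r) hc, ?_⟩
        rw [abs_of_nonneg (smul_nonneg (abs_nonneg r) (abs_nonneg m))]
        calc |r • w| ≤ |r| • |w| := aux_abs_smul_le r w
          _ ≤ |r| • (|m| + c • y) := smul_le_smul_of_nonneg_left h (abs_nonneg r)
          _ = |r| • |m| + (|r| * c) • y := by rw [smul_add, smul_smul]
      · rintro w ⟨m, hm, c, hc, h⟩ v hvw
        exact ⟨m, hm, c, hc, hvw.trans h⟩
      · rintro w ⟨m, hm, c, hc, h⟩ c₀
        obtain ⟨l, hl, hc₀⟩ := order_unit c₀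
        set w0 : A := |m| + c • y with hw0_def
        set ac : A := |c₀| with hac_def
        have hmy : (0:A) ≤ w0 := add_nonneg (abs_nonneg m) (smul_nonneg hc hy)
        have key1 : mul ac w0 ≤ l • w0 := by
          calc mul ac w0 ≤ mul (l • e) w0 := mul_mono_right _ _ _ hmy hc₀
            _ = l • mul e w0 := by rw [map_smul, LinearMap.smul_apply]
            _ = l • w0 := by rw [one_mul]
        have key2 : mul w0 ac ≤ l • w0 := by
          calc mul w0 ac ≤ mul w0 (l • e) := mul_mono_left _ _ _ hmy hc₀
            _ = l • mul w0 e := by rw [map_smul]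
            _ = l • w0 := by rw [mul_one]
        have hbound : l • w0 = l • |m| + (l * c) • y := by
          rw [hw0_def, smul_add, smul_smul]
        have hmem : l • |m| ∈ M := hMsmul l _ (habs_mem m hm)
        have habs2 : abs (l • |m|) = l • |m| := abs_of_nonneg (smul_nonneg hl (abs_nonneg m))
        constructor
        · refine ⟨l • |m|, hmem, l * c, _root_.mul_nonneg hl hc, ?_⟩
          rw [habs2, ← hbound]
          calc |mul c₀ w| ≤ mul ac |w| := mul_abs_le c₀ w
            _ ≤ mul ac w0 := mul_mono_left _ _ _ (abs_nonneg c₀) h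
            _ ≤ l • w0 := key1
        · refine ⟨l • |m|, hmem, l * c, _root_.mul_nonneg hl hc, ?_⟩
          rw [habs2, ← hbound]
          calc |mul w c₀| ≤ mul |w| ac := mul_abs_le w c₀
            _ ≤ mul w0 ac := mul_mono_right _ _ _ (abs_nonneg c₀) h
            _ ≤ l • w0 := key2
    have hMI : M ⊆ I := fun m hm => ⟨m, hm, 0, le_rfl, by simp⟩
    have hyI : y ∈ I := ⟨0, hM0, 1, zero_le_one, by simp [abs_of_nonneg hy]⟩
    have hIuniv : I = Set.univ := by
      by_contra hne
      exact hyM ((hMmax I hI hne hMI) ▸ hyI)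
    have heI : e ∈ I := hIuniv ▸ Set.mem_univ e
    obtain ⟨m, hm, c, hc, hec⟩ := heI
    exact ⟨m, hm, c, hc, habs_e ▸ hec⟩
  -- M is closed
  have hM_closed : ∀ u : A, (∀ ε : ℝ, 0 < ε → ∃ m ∈ M, ‖u - m‖ < ε) → u ∈ M := by
    set N : Submodule ℝ A :=
      { carrier := M
        add_mem' := fun {a b} ha hb => hMadd a ha b hb
        zero_mem' := hM0
        smul_mem' := fun r a ha => hMsmul r a ha } with hN_def
    have hcl : IsLatticeAlgebraIdeal mul (closure M) := by
      have hclN : closure M = (N.topologicalClosure : Set A) := rfl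
      refine ⟨subset_closure hM0, ?_, ?_, ?_, ?_⟩
      · intro a ha b hb
        rw [hclN] at ha hb ⊢
        exact N.topologicalClosure.add_mem ha hb
      · intro r a ha
        rw [hclN] at ha ⊢
        exact N.topologicalClosure.smul_mem r ha
      · intro x hx y hxy
        rw [mem_closure_iff_seq_limit] at hx ⊢
        obtain ⟨f, hfM, hf⟩ := hx
        refine ⟨fun n => (y ⊔ (-|f n|)) ⊓ |f n|, ?_, ?_⟩
        · intro n
          refine hMord (f n) (hfM n) _ (abs_le'.2 ⟨inf_le_right, ?_⟩)
          have h1 : -|f n| ≤ (y ⊔ (-|f n|)) ⊓ |f n| := le_inf le_sup_right ((neg_nonpos_of_nonneg (abs_nonneg (f n))).trans (abs_nonneg (f n)))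
          exact neg_le.mp h1
        · have habs : Filter.Tendsto (fun n => |f n|) Filter.atTop (nhds |x|) :=
            hf.sup_nhds hf.neg
          have hy1 : -|x| ≤ y := neg_le.mp ((neg_le_abs y).trans hxy)
          have hy2 : y ≤ |x| := (le_abs_self y).trans hxy
          have hconv := (Filter.Tendsto.sup_nhds (tendsto_const_nhds (x := y)) habs.neg).inf_nhds habs
          rwa [sup_eq_left.2 hy1, inf_eq_left.2 hy2] at hconv
      · intro x hx c
        have hcontL : Continuous (mul c) := AddMonoidHomClass.continuous_of_bound (mul c) ‖c‖ (norm_mul_le c)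
        have hcontR : Continuous (mul.flip c) := AddMonoidHomClass.continuous_of_bound (mul.flip c) ‖c‖
          (fun a => by rw [mul_comm]; exact norm_mul_le a c)
        constructor
        · have h1 : mul c x ∈ mul c '' closure M := ⟨x, hx, rfl⟩
          have h2 := image_closure_subset_closure_image (s := M) hcontL h1
          exact closure_mono (Set.image_subset_iff.2 fun m hm => (hMmul m hm c).1) h2
        · have h1 : mul x c ∈ (mul.flip c) '' closure M := ⟨x, hx, rfl⟩
          have h2 := image_closure_subset_closure_image (s := M) hcontR h1
          refine closure_mono (Set.image_subset_iff.2 fun m hm => ?_) h2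
          exact (hMmul m hm c).2
    have hcl_ne : closure M ≠ Set.univ := by
      intro h
      have he_cl : e ∈ closure M := h ▸ Set.mem_univ e
      rw [Metric.mem_closure_iff] at he_cl
      obtain ⟨m, hm, hd⟩ := he_cl 1 one_pos
      rw [dist_eq_norm] at hd
      set r : ℝ := (1 + ‖e - m‖) / 2 with hr_def
      have hr1 : r < 1 := by rw [hr_def]; linarith
      have habs : |e - m| ≤ r • e := norm_to_abs _ _ (by rw [hr_def]; linarith)
      have h1 : e - m ≤ r • e := (le_abs_self _).trans habs
      have h2 : (1 - r) • e ≤ m := by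
        rw [sub_smul, one_smul]
        exact sub_le_comm.mp h1
      have h3 : e ≤ (1 - r)⁻¹ • m := by
        have h4 := smul_le_smul_of_nonneg_left h2 (le_of_lt (inv_pos.2 (by linarith : (0:ℝ) < 1 - r)))
        rwa [smul_smul, inv_mul_cancel₀ (by linarith : (1:ℝ) - r ≠ 0), one_smul] at h4
      exact hMfull _ (hMsmul _ m hm) h3
    have hclM : closure M = M := hMmax (closure M) hcl hcl_ne subset_closure
    intro u hu
    rw [← hclM, Metric.mem_closure_iff]
    intro ε hε
    obtain ⟨m, hm, hum⟩ := hu ε hε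
    exact ⟨m, hm, by rwa [dist_eq_norm]⟩
  -- main construction
  intro x
  obtain ⟨l₀, hl₀, hx₀⟩ := order_unit x
  have hnegx : -(l₀ • e) ≤ x := neg_le.mp ((neg_le_abs x).trans hx₀)
  set S := {t : ℝ | ∃ m ∈ M, x ≤ t • e + m} with hS_def
  set T := {t : ℝ | ∃ m ∈ M, t • e ≤ x + m} with hT_def
  have hSne : l₀ ∈ S := ⟨0, hM0, by rw [add_zero]; exact (le_abs_self x).trans hx₀⟩
  have hSbdd : ∀ t ∈ S, -(l₀ + 1) ≤ t := by
    rintro t ⟨m, hm, hxm⟩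
    by_contra hcon
    push_neg at hcon
    have h2 : -(l₀ • e) - t • e ≤ m := by
      rw [sub_le_iff_le_add, add_comm]
      exact hnegx.trans hxm
    have h1 : (-l₀ - t) • e ≤ m := by rw [sub_smul, neg_smul]; exact h2
    have h4 : e ≤ (-l₀ - t) • e := by
      calc e = (1:ℝ) • e := (one_smul ℝ e).symm
        _ ≤ (-l₀ - t) • e := smul_le_smul_of_nonneg_right (by linarith) he_pos
    exact hMfull m hm (h4.trans h1)
  have hSbb : BddBelow S := ⟨-(l₀ + 1), fun t ht => hSbdd t ht⟩
  have hTS : ∀ t ∈ T, ∀ s ∈ S, t ≤ s := by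
    rintro t ⟨m, hm, htm⟩ s ⟨m', hm', hsm⟩
    by_contra hcon
    push_neg at hcon
    have hA : t • e ≤ s • e + (m + m') := by
      calc t • e ≤ x + m := htm
        _ ≤ s • e + m' + m := add_le_add_left hsm m
        _ = s • e + (m + m') := by abel
    have h1 : (t - s) • e ≤ m + m' := by
      rw [sub_smul, sub_le_iff_le_add]
      calc t • e ≤ s • e + (m + m') := hA
        _ = (m + m') + s • e := by abel
    have h2 : e ≤ (t - s)⁻¹ • (m + m') := by
      have h3 := smul_le_smul_of_nonneg_left h1 (le_of_lt (inv_pos.2 (by linarith : (0:ℝ) < t - s)))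
      rwa [smul_smul, inv_mul_cancel₀ (by linarith : t - s ≠ 0), one_smul] at h3
    exact hMfull _ (hMsmul _ _ (hMadd m hm m' hm')) h2
  set lam := sInf S with hlam_def
  -- key approximation from below
  have key : ∀ ε : ℝ, 0 < ε → ∃ t ∈ T, lam - ε < t := by
    intro ε hε
    by_contra hcon
    push_neg at hcon
    set tt := lam - ε / 2 with htt_def
    have htt_lt : tt < lam := by rw [htt_def]; linarith
    set u := x - tt • e with hu_def
    have hyM : u⁺ ∉ M := by
      intro hy
      have hmem : tt ∈ S := ⟨u⁺, hy, by
        have h1 : x - tt • e ≤ u⁺ := le_posPart u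
        rw [add_comm]
        exact sub_le_iff_le_add.mp h1⟩
      exact absurd (csInf_le hSbb hmem) (not_le.2 htt_lt)
    have hzM : u⁻ ∉ M := by
      intro hz
      have h1 : -u ≤ u⁻ := neg_le_negPart u
      have h2 : tt • e - x ≤ u⁻ := by rw [← neg_sub x (tt • e)]; exact h1
      have hmem : tt ∈ T := ⟨u⁻, hz, by rw [add_comm]; exact sub_le_iff_le_add.mp h2⟩
      have h3 := hcon tt hmem
      rw [htt_def] at h3
      linarith
    obtain ⟨m, hm, c, hc, hec⟩ := ideal_gen (u⁺) (posPart_nonneg u) hyM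
    obtain ⟨l₁, hl₁, hz₁⟩ := order_unit (u⁻)
    rw [abs_of_nonneg (negPart_nonneg u)] at hz₁
    set c' := max (l₁ * c) 1 with hc'_def
    have hc'1 : (1:ℝ) ≤ c' := le_max_right _ _
    have hc'0 : (0:ℝ) < c' := lt_of_lt_of_le zero_lt_one hc'1
    have hzb : u⁻ ≤ l₁ • |m| + c' • u⁺ := by
      calc u⁻ ≤ l₁ • e := hz₁
        _ ≤ l₁ • (|m| + c • u⁺) := smul_le_smul_of_nonneg_left hec hl₁
        _ = l₁ • |m| + (l₁ * c) • u⁺ := by rw [smul_add, smul_smul]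
        _ ≤ l₁ • |m| + c' • u⁺ := add_le_add_right
            (smul_le_smul_of_nonneg_right (le_max_left (l₁ * c) 1) (posPart_nonneg u)) _
    have hdisj : u⁻ ⊓ (c' • u⁺) = 0 := by
      refine le_antisymm ?_
        (le_inf (negPart_nonneg u) (smul_nonneg (le_of_lt hc'0) (posPart_nonneg u)))
      have h1 : u⁻ ⊓ (c' • u⁺) ≤ (c' • u⁻) ⊓ (c' • u⁺) := by
        refine inf_le_inf_right _ ?_
        calc u⁻ = (1:ℝ) • u⁻ := (one_smul ℝ _).symm
          _ ≤ c' • u⁻ := smul_le_smul_of_nonneg_right hc'1 (negPart_nonneg u)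
      have h2 : (c' • u⁻) ⊓ (c' • u⁺) = c' • (u⁻ ⊓ u⁺) := (aux_smul_inf c' hc'0 _ _).symm
      have h3 : u⁻ ⊓ u⁺ = 0 := by rw [inf_comm]; exact posPart_inf_negPart_eq_zero u
      rw [h2, h3, smul_zero] at h1
      exact h1
    have hzle : u⁻ ≤ l₁ • |m| := by
      have h1 : u⁻ = u⁻ ⊓ (l₁ • |m| + c' • u⁺) := (inf_eq_left.2 hzb).symm
      have h2 : u⁻ ⊓ (l₁ • |m| + c' • u⁺) ≤ u⁻ ⊓ (l₁ • |m|) + u⁻ ⊓ (c' • u⁺) :=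
        aux_riesz_inf_add _ _ _ (negPart_nonneg u)
          (smul_nonneg hl₁ (abs_nonneg m)) (smul_nonneg (le_of_lt hc'0) (posPart_nonneg u))
      rw [hdisj, add_zero] at h2
      exact (h1.le.trans h2).trans inf_le_right
    have hfin : u⁻ ∈ M := by
      refine hMord (l₁ • |m|) (hMsmul l₁ _ (habs_mem m hm)) _ ?_
      rw [abs_of_nonneg (smul_nonneg hl₁ (abs_nonneg m)), abs_of_nonneg (negPart_nonneg u)]
      exact hzle
    exact hzM hfin
  -- existence
  have hex : x - lam • e ∈ M := by
    apply hM_closed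
    intro ε hε
    have hε2 : (0:ℝ) < ε / 2 := by linarith
    obtain ⟨s, hsS, hs⟩ := exists_lt_of_csInf_lt ⟨l₀, hSne⟩
      (show lam < lam + ε / 2 by linarith)
    obtain ⟨m, hm, hxm⟩ := hsS
    obtain ⟨t, htT, ht⟩ := key (ε / 2) hε2
    have htlam : t ≤ lam := le_csInf ⟨l₀, hSne⟩ (hTS t htT)
    obtain ⟨m', hm', hxm'⟩ := htT
    set u := x - lam • e with hu_def
    set m'' := -m' with hm''_def
    have hm''M : m'' ∈ M := by
      have h := hMsmul (-1) m' hm'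
      rwa [neg_one_smul] at h
    have h1 : u ≤ m + (ε/2) • e := by
      have hse : s • e - lam • e ≤ (ε/2) • e := by
        rw [← sub_smul]
        exact smul_le_smul_of_nonneg_right (by linarith) he_pos
      calc u = x - lam • e := hu_def
        _ ≤ (s • e + m) - lam • e := sub_le_sub_right hxm _
        _ = (s • e - lam • e) + m := by abel
        _ ≤ (ε/2) • e + m := add_le_add_left hse m
        _ = m + (ε/2) • e := by abel
    have h2 : m'' - (ε/2) • e ≤ u := by
      have hte : -((ε/2) • e) ≤ t • e - lam • e := by
        rw [← sub_smul, ← neg_smul]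
        exact smul_le_smul_of_nonneg_right (by linarith) he_pos
      have htx : t • e - m' ≤ x := sub_le_iff_le_add.mpr hxm'
      calc m'' - (ε/2) • e = -((ε/2) • e) + -m' := by rw [hm''_def]; abel
        _ ≤ (t • e - lam • e) + -m' := add_le_add_left hte _
        _ = (t • e - m') - lam • e := by abel
        _ ≤ x - lam • e := sub_le_sub_right htx _
        _ = u := hu_def.symm
    set v := (u ⊔ m'') ⊓ (m ⊔ m'') with hv_def
    have hvM : v ∈ M := by
      refine hbetween m'' hm''M (m ⊔ m'') (hsup_mem m hm m'' hm''M) v ?_ inf_le_right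
      exact le_inf le_sup_right le_sup_right
    have hv_ub : v ≤ u + (ε/2) • e := by
      have hs1 : u ⊔ m'' ≤ u + (ε/2) • e := sup_le
        (le_add_of_nonneg_right (smul_nonneg (by linarith) he_pos))
        (sub_le_iff_le_add.mp h2)
      exact inf_le_left.trans hs1
    have hv_lb : u - (ε/2) • e ≤ v := by
      refine le_inf ?_ ?_
      · exact (sub_le_self u (smul_nonneg (by linarith) he_pos)).trans le_sup_left
      · exact (sub_le_iff_le_add.mpr h1).trans le_sup_left
    have habs : |u - v| ≤ (ε/2) • e := by
      refine abs_le'.2 ⟨sub_le_comm.mp hv_lb, ?_⟩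
      rw [neg_sub]
      exact sub_le_iff_le_add.mpr (hv_ub.trans_eq (add_comm _ _))
    have hnorm := abs_to_norm (u - v) (ε/2) (by linarith) habs
    exact ⟨v, hvM, lt_of_le_of_lt hnorm (by linarith)⟩
  refine ⟨lam, hex, ?_⟩
  intro l hl
  by_contra hne
  have hdiff : (lam - l) • e ∈ M := by
    have h := hMsub _ hl _ hex
    have heq2 : x - l • e - (x - lam • e) = (lam - l) • e := by
      rw [sub_smul]; abel
    rwa [heq2] at h
  have heM2 : e ∈ M := by
    have h1 := hMsmul (lam - l)⁻¹ _ hdiff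
    rwa [smul_smul, inv_mul_cancel₀ (sub_ne_zero.2 (Ne.symm hne)), one_smul] at h1
  exact heM heM2
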